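/- Let X₁,…,X_N be jointly distributed random variables and let Q be another random variable, all with finite ranges, and let 1 ≤ T ≤ N. Then the average of the conditional joint entropies H(X_𝒯 | Q) over all subsets 𝒯 ⊆ {1,…,N} of size T is at least (T/N)·H(X₁,…,X_N | Q). -/

import Mathlib

open scoped BigOperators

/-- Shannon entropy (in nats) of a finite-range random variable `X` under `μ`. -/
noncomputable def Hent {Ω α : Type*} [Fintype α] (μ : PMF Ω) (X : Ω → α) : ℝ :=
  ∑ a : α, Real.negMulLog (((μ.map X) a).toReal)

/-- Conditional entropy `H(X | Y)`. -/
noncomputable def Hcond {Ω α β : Type*} [Fintype α] [Fintype β] (μ : PMF Ω)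
    (X : Ω → α) (Y : Ω → β) : ℝ :=
  Hent μ (fun ω => (X ω, Y ω)) - Hent μ Y

open scoped Classical
open Real

namespace HanAux

variable {γ δ ε : Type*}

/-- Pushforward of a weight function along a map. -/
noncomputable def push [Fintype γ] (g : γ → δ) (P : γ → ℝ) (b : δ) : ℝ :=
  ∑ a : γ, if b = g a then P a else 0

/-- Entropy functional of a weight function. -/
noncomputable def entF [Fintype δ] (P : δ → ℝ) : ℝ := ∑ d : δ, Real.negMulLog (P d)

lemma push_nonneg [Fintype γ] (g : γ → δ) {P : γ → ℝ} (hP : ∀ a, 0 ≤ P a) (b : δ) :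
    0 ≤ push g P b := by
  refine Finset.sum_nonneg fun a _ => ?_
  split <;> simp [hP]

lemma push_comp [Fintype γ] [Fintype δ] (g : δ → ε) (h : γ → δ) (P : γ → ℝ) :
    push g (push h P) = push (g ∘ h) P := by
  funext b
  simp only [push, Function.comp]
  calc (∑ x : δ, if b = g x then ∑ a : γ, if x = h a then P a else 0 else 0)
      = ∑ x : δ, ∑ a : γ, if b = g x ∧ x = h a then P a else 0 := by
        refine Finset.sum_congr rfl fun x _ => ?_
        by_cases h1 : b = g x
        · rw [if_pos h1]
          exact Finset.sum_congr rfl fun a _ => by simp [h1]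
        · rw [if_neg h1]
          exact (Finset.sum_eq_zero fun a _ => by simp [h1]).symm
    _ = ∑ a : γ, ∑ x : δ, if b = g x ∧ x = h a then P a else 0 := Finset.sum_comm
    _ = ∑ a : γ, if b = g (h a) then P a else 0 := by
        refine Finset.sum_congr rfl fun a _ => ?_
        rw [Finset.sum_eq_single (h a)]
        · simp
        · intro x _ hx
          exact if_neg fun hc => hx hc.2
        · simp

lemma push_id [Fintype γ] (P : γ → ℝ) : push id P = P := by
  funext b; simp [push]


lemma negMulLog_sum_le {s : Finset γ} {f : γ → ℝ} (hf : ∀ a ∈ s, 0 ≤ f a) :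
    Real.negMulLog (∑ a ∈ s, f a) ≤ ∑ a ∈ s, Real.negMulLog (f a) := by
  have hs : 0 ≤ ∑ a ∈ s, f a := Finset.sum_nonneg hf
  rw [Real.negMulLog, neg_mul, Finset.sum_mul, ← Finset.sum_neg_distrib]
  refine Finset.sum_le_sum fun a ha => ?_
  rw [Real.negMulLog, neg_mul, neg_le_neg_iff]
  rcases eq_or_lt_of_le (hf a ha) with h0 | h0
  · simp [← h0]
  · exact mul_le_mul_of_nonneg_left
      (Real.log_le_log h0 (Finset.single_le_sum hf ha)) (hf a ha)

lemma entF_push_le [Fintype γ] [Fintype δ] (g : γ → δ) {P : γ → ℝ} (hP : ∀ a, 0 ≤ P a) :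
    entF (push g P) ≤ entF P := by
  unfold entF push
  calc ∑ d : δ, Real.negMulLog (∑ a : γ, if d = g a then P a else 0)
      ≤ ∑ d : δ, ∑ a : γ, Real.negMulLog (if d = g a then P a else 0) := by
        refine Finset.sum_le_sum fun d _ => negMulLog_sum_le fun a _ => ?_
        split <;> simp [hP]
    _ = ∑ a : γ, ∑ d : δ, if d = g a then Real.negMulLog (P a) else 0 := by
        rw [Finset.sum_comm]
        refine Finset.sum_congr rfl fun a _ => Finset.sum_congr rfl fun d _ => ?_
        split <;> simp
    _ = ∑ a : γ, Real.negMulLog (P a) := by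
        refine Finset.sum_congr rfl fun a _ => ?_
        simp

lemma entF_push_inj [Fintype γ] [Fintype δ] {g : γ → δ} (hg : Function.Injective g)
    {P : γ → ℝ} (hP : ∀ a, 0 ≤ P a) : entF (push g P) = entF P := by
  rcases isEmpty_or_nonempty γ with hγ | hγ
  · have h1 : ∀ d, push g P d = 0 := fun d => by simp [push]
    unfold entF
    rw [Finset.sum_congr rfl fun d _ => by rw [h1 d]]
    simp [Finset.sum_const_zero]
  · obtain ⟨g', hg'⟩ := hg.hasLeftInverse
    refine le_antisymm (entF_push_le g hP) ?_
    have h2 : push g' (push g P) = P := by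
      rw [push_comp]
      have : g' ∘ g = id := funext hg'
      rw [this, push_id]
    calc entF P = entF (push g' (push g P)) := by rw [h2]
      _ ≤ entF (push g P) := entF_push_le g' (push_nonneg g hP)

lemma entF_push_inj_comp [Fintype γ] [Fintype δ] [Fintype ε] (g : γ → δ) {e : δ → ε}
    (he : Function.Injective e) {P : γ → ℝ} (hP : ∀ a, 0 ≤ P a) :
    entF (push (e ∘ g) P) = entF (push g P) := by
  rw [← push_comp]
  exact entF_push_inj he (push_nonneg g hP)


lemma push_weight [Fintype γ] [Fintype δ] (g : γ → δ) (P : γ → ℝ) (F : δ → ℝ) :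
    ∑ b : δ, push g P b * F b = ∑ a : γ, P a * F (g a) := by
  simp only [push, Finset.sum_mul]
  rw [Finset.sum_comm]
  refine Finset.sum_congr rfl fun a _ => ?_
  rw [Finset.sum_eq_single (g a)]
  · simp
  · intro b _ hb
    rw [if_neg fun hc => hb hc, zero_mul]
  · simp

lemma entF_eq_neg_sum [Fintype δ] (P : δ → ℝ) : entF P = -∑ d : δ, P d * Real.log (P d) := by
  simp [entF, Real.negMulLog, Finset.sum_neg_distrib]

lemma entF_push_eq [Fintype γ] [Fintype δ] (g : γ → δ) (P : γ → ℝ) :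
    entF (push g P) = -∑ a : γ, P a * Real.log (push g P (g a)) := by
  rw [entF_eq_neg_sum, push_weight g P (fun b => Real.log (push g P b))]

lemma le_push_self [Fintype γ] (g : γ → δ) {P : γ → ℝ} (hP : ∀ a, 0 ≤ P a) (w : γ) :
    P w ≤ push g P (g w) := by
  have := Finset.single_le_sum (f := fun a => if g w = g a then P a else 0)
    (fun a _ => by split <;> simp [hP]) (Finset.mem_univ w)
  simpa [push] using this

lemma push_snd {σ τ : Type*} [Fintype σ] [Fintype τ] (P : σ × τ → ℝ) (b : τ) :
    push Prod.snd P b = ∑ s : σ, P (s, b) := by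
  simp only [push, Fintype.sum_prod_type]
  exact Finset.sum_congr rfl fun s _ => by simp [Finset.sum_ite_eq]

lemma push_equivf {γ δ : Type*} [Fintype γ] (e : γ ≃ δ) (P : γ → ℝ) (b : δ) :
    push (⇑e) P b = P (e.symm b) := by
  simp only [push]
  rw [Finset.sum_eq_single (e.symm b)]
  · simp
  · intro a _ ha
    rw [if_neg fun hc => ha (by simp [hc])]
  · simp

/-- A rotation equivalence on triple products. -/
def rot3 (γ₁ γ₂ γ₃ : Type*) : γ₁ × γ₂ × γ₃ ≃ γ₂ × γ₁ × γ₃ :=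
  ⟨fun w => (w.2.1, (w.1, w.2.2)), fun p => (p.2.1, (p.1, p.2.2)), fun _ => rfl, fun _ => rfl⟩

lemma entF_submod {γ₁ γ₂ γ₃ : Type*} [Fintype γ₁] [Fintype γ₂] [Fintype γ₃]
    (P : γ₁ × γ₂ × γ₃ → ℝ) (hP : ∀ w, 0 ≤ P w) :
    entF P + entF (push (fun w => w.2.2) P) ≤
      entF (push (fun w => (w.1, w.2.2)) P) + entF (push (fun w => w.2) P) := by
  classical
  set m13 := push (fun w : γ₁ × γ₂ × γ₃ => (w.1, w.2.2)) P with hm13def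
  set m23 := push (fun w : γ₁ × γ₂ × γ₃ => w.2) P with hm23def
  set m3 := push (fun w : γ₁ × γ₂ × γ₃ => w.2.2) P with hm3def
  have hm13n : ∀ b, 0 ≤ m13 b := push_nonneg _ hP
  have hm23n : ∀ b, 0 ≤ m23 b := push_nonneg _ hP
  have hm3n : ∀ b, 0 ≤ m3 b := push_nonneg _ hP
  -- explicit formulas for marginals
  have hm13 : ∀ x z, m13 (x, z) = ∑ y : γ₂, P (x, y, z) := by
    intro x z
    have h1 : m13 = push Prod.snd (push (⇑(rot3 γ₁ γ₂ γ₃)) P) := by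
      rw [hm13def, push_comp]; rfl
    rw [h1, push_snd]
    exact Finset.sum_congr rfl fun y _ => by rw [push_equivf]; rfl
  have hm23 : ∀ y z, m23 (y, z) = ∑ x : γ₁, P (x, y, z) := by
    intro y z
    rw [hm23def]
    exact push_snd P (y, z)
  have hm3 : ∀ z, m3 z = ∑ y : γ₂, ∑ x : γ₁, P (x, y, z) := by
    intro z
    have h1 : m3 = push Prod.snd (push (Prod.snd) P) := by
      rw [hm3def, push_comp]; rfl
    rw [h1, push_snd]
    exact Finset.sum_congr rfl fun y _ => by rw [push_snd]
  -- the auxiliary comparison function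
  set q : γ₁ × γ₂ × γ₃ → ℝ :=
    fun w => m13 (w.1, w.2.2) * m23 w.2 / m3 w.2.2 with hqdef
  have hqn : ∀ w, 0 ≤ q w := fun w =>
    div_nonneg (mul_nonneg (hm13n _) (hm23n _)) (hm3n _)
  set t : γ₁ × γ₂ × γ₃ → ℝ := fun w =>
    P w * (Real.log (P w) + Real.log (m3 w.2.2)
      - Real.log (m13 (w.1, w.2.2)) - Real.log (m23 w.2)) with htdef
  -- pointwise bound
  have hpt : ∀ w, P w - q w ≤ t w := by
    intro w
    rcases eq_or_lt_of_le (hP w) with h0 | h0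
    · simp only [htdef, ← h0]
      simp [hqn w]
    · have hb : P w ≤ m13 (w.1, w.2.2) := le_push_self _ hP w
      have hc : P w ≤ m23 w.2 := le_push_self _ hP w
      have hd : P w ≤ m3 w.2.2 := le_push_self _ hP w
      have hbp : 0 < m13 (w.1, w.2.2) := lt_of_lt_of_le h0 hb
      have hcp : 0 < m23 w.2 := lt_of_lt_of_le h0 hc
      have hdp : 0 < m3 w.2.2 := lt_of_lt_of_le h0 hd
      have hqp : 0 < q w := div_pos (mul_pos hbp hcp) hdp
      have hlog : Real.log (q w) = Real.log (m13 (w.1, w.2.2)) + Real.log (m23 w.2)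
          - Real.log (m3 w.2.2) := by
        rw [hqdef]
        rw [Real.log_div (mul_pos hbp hcp).ne' hdp.ne', Real.log_mul hbp.ne' hcp.ne']
      have h1 : Real.log (q w / P w) ≤ q w / P w - 1 :=
        Real.log_le_sub_one_of_pos (div_pos hqp h0)
      rw [Real.log_div hqp.ne' h0.ne'] at h1
      have h2 : P w * (Real.log (q w) - Real.log (P w)) ≤ q w - P w := by
        have := mul_le_mul_of_nonneg_left h1 (le_of_lt h0)
        calc P w * (Real.log (q w) - Real.log (P w)) ≤ P w * (q w / P w - 1) := this
          _ = q w - P w := by field_simp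
      have ht' : t w = P w * (Real.log (P w) - Real.log (q w)) := by
        rw [htdef, hlog]; ring
      rw [ht']
      nlinarith [h2]
  -- total mass of q equals total mass of P
  have hq_sum : ∑ w : γ₁ × γ₂ × γ₃, q w = ∑ w : γ₁ × γ₂ × γ₃, P w := by
    have key : ∀ f : γ₁ × γ₂ × γ₃ → ℝ, ∑ w : γ₁ × γ₂ × γ₃, f w
        = ∑ z : γ₃, ∑ x : γ₁, ∑ y : γ₂, f (x, y, z) := by
      intro f
      calc ∑ w : γ₁ × γ₂ × γ₃, f w = ∑ x : γ₁, ∑ y : γ₂, ∑ z : γ₃, f (x, y, z) := by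
            rw [Fintype.sum_prod_type]
            exact Finset.sum_congr rfl fun x _ => Fintype.sum_prod_type _
        _ = ∑ x : γ₁, ∑ z : γ₃, ∑ y : γ₂, f (x, y, z) :=
            Finset.sum_congr rfl fun x _ => Finset.sum_comm
        _ = ∑ z : γ₃, ∑ x : γ₁, ∑ y : γ₂, f (x, y, z) := Finset.sum_comm
    rw [key q, key P]
    refine Finset.sum_congr rfl fun z _ => ?_
    have SB : ∑ y : γ₂, m23 (y, z) = m3 z := by
      rw [hm3]
      exact Finset.sum_congr rfl fun y _ => hm23 y z
    have SA : ∑ x : γ₁, m13 (x, z) = m3 z := by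
      rw [hm3, Finset.sum_comm]
      exact Finset.sum_congr rfl fun x _ => hm13 x z
    have SP : ∑ x : γ₁, ∑ y : γ₂, P (x, y, z) = m3 z := by
      rw [hm3]
      exact Finset.sum_comm
    rw [SP]
    have hq' : ∀ x y, q (x, y, z) = m13 (x, z) * m23 (y, z) / m3 z := fun x y => rfl
    simp only [hq']
    rcases eq_or_lt_of_le (hm3n z) with h0 | h0
    · have hx : ∀ x : γ₁, m13 (x, z) = 0 := by
        have := (Finset.sum_eq_zero_iff_of_nonneg
          (fun x (_ : x ∈ Finset.univ) => hm13n (x, z))).mp (SA.trans h0.symm)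
        exact fun x => this x (Finset.mem_univ x)
      rw [← h0]
      refine Finset.sum_eq_zero fun x _ => Finset.sum_eq_zero fun y _ => ?_
      rw [hx x, zero_mul, zero_div]
    · calc ∑ x : γ₁, ∑ y : γ₂, m13 (x, z) * m23 (y, z) / m3 z
          = ∑ x : γ₁, m13 (x, z) * m3 z / m3 z := by
            refine Finset.sum_congr rfl fun x _ => ?_
            rw [← Finset.sum_div, ← Finset.mul_sum, SB]
        _ = ∑ x : γ₁, m13 (x, z) := by
            refine Finset.sum_congr rfl fun x _ => ?_
            rw [mul_div_assoc, div_self h0.ne', mul_one]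
        _ = m3 z := SA
  have hsum : 0 ≤ ∑ w : γ₁ × γ₂ × γ₃, t w := by
    have h1 : ∑ w : γ₁ × γ₂ × γ₃, (P w - q w) ≤ ∑ w : γ₁ × γ₂ × γ₃, t w :=
      Finset.sum_le_sum fun w _ => hpt w
    rw [Finset.sum_sub_distrib, hq_sum, sub_self] at h1
    exact h1
  have expand : ∑ w : γ₁ × γ₂ × γ₃, t w =
      ((∑ w : γ₁ × γ₂ × γ₃, P w * Real.log (P w))
      + (∑ w : γ₁ × γ₂ × γ₃, P w * Real.log (m3 w.2.2)))
      - (∑ w : γ₁ × γ₂ × γ₃, P w * Real.log (m13 (w.1, w.2.2)))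
      - (∑ w : γ₁ × γ₂ × γ₃, P w * Real.log (m23 w.2)) := by
    rw [← Finset.sum_add_distrib, ← Finset.sum_sub_distrib, ← Finset.sum_sub_distrib]
    exact Finset.sum_congr rfl fun w _ => by rw [htdef]; ring
  have e1 : entF P = -∑ w : γ₁ × γ₂ × γ₃, P w * Real.log (P w) := entF_eq_neg_sum P
  have e2 : entF m3 = -∑ w : γ₁ × γ₂ × γ₃, P w * Real.log (m3 w.2.2) :=
    entF_push_eq _ P
  have e3 : entF m13 = -∑ w : γ₁ × γ₂ × γ₃, P w * Real.log (m13 (w.1, w.2.2)) :=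
    entF_push_eq _ P
  have e4 : entF m23 = -∑ w : γ₁ × γ₂ × γ₃, P w * Real.log (m23 w.2) :=
    entF_push_eq _ P
  rw [e1, e2, e3, e4]
  rw [expand] at hsum
  linarith


section Bridge

variable {Ω γ δ : Type*} [Fintype γ] [Fintype δ]

lemma toReal_map (q : PMF γ) (g : γ → δ) (b : δ) :
    ((q.map g) b).toReal = push g (fun a => (q a).toReal) b := by
  classical
  rw [PMF.map_apply, tsum_fintype, ENNReal.toReal_sum (fun a _ => by
    split
    · exact q.apply_ne_top a
    · exact ENNReal.zero_ne_top)]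
  refine Finset.sum_congr rfl fun a _ => ?_
  split <;> simp

lemma Hent_comp (μ : PMF Ω) (W : Ω → γ) (g : γ → δ) :
    Hent μ (fun ω => g (W ω)) = entF (push g (fun a => ((μ.map W) a).toReal)) := by
  unfold Hent entF
  refine Finset.sum_congr rfl fun d _ => ?_
  rw [show (fun ω => g (W ω)) = g ∘ W from rfl, ← PMF.map_comp, toReal_map]

end Bridge

section Subsets

variable {Ω β : Type*} {N : ℕ} {α : Fin N → Type*} [∀ i, Fintype (α i)] [Fintype β]

/-- Restriction of a full tuple (together with side information) to a subset of coordinates. -/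
def gS (S : Finset (Fin N)) : ((∀ i, α i) × β) → ((∀ i : S, α i.1) × β) :=
  fun vb => (fun i => vb.1 i.1, vb.2)

/-- Splitting off an inserted coordinate. -/
def splitIns (a : Fin N) (S : Finset (Fin N)) :
    ((∀ i : (insert a S : Finset (Fin N)), α i.1) × β) → (α a × ((∀ i : S, α i.1) × β)) :=
  fun tc => (tc.1 ⟨a, Finset.mem_insert_self a S⟩,
    (fun i => tc.1 ⟨i.1, Finset.mem_insert_of_mem i.2⟩, tc.2))

lemma splitIns_inj (a : Fin N) (S : Finset (Fin N)) :
    Function.Injective (splitIns (α := α) (β := β) a S) := by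
  rintro ⟨t, c⟩ ⟨t', c'⟩ h
  simp only [splitIns, Prod.mk.injEq] at h
  obtain ⟨h1, h2, h3⟩ := h
  refine Prod.ext ?_ h3
  funext i
  rcases i with ⟨i, hi⟩
  rcases Finset.mem_insert.mp hi with rfl | hiS
  · exact h1
  · exact congrFun h2 ⟨i, hiS⟩

/-- The joint entropy of the coordinates in `S` together with the side information. -/
noncomputable def FS (ρ : ((∀ i, α i) × β) → ℝ) (S : Finset (Fin N)) : ℝ :=
  entF (push (gS S) ρ)

variable {ρ : ((∀ i, α i) × β) → ℝ} (hρ : ∀ w, 0 ≤ ρ w)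

include hρ

lemma FS_insert (a : Fin N) (S : Finset (Fin N)) :
    FS ρ (insert a S) = entF (push (fun vb => (vb.1 a, gS S vb)) ρ) := by
  have h1 : (fun vb : (∀ i, α i) × β => (vb.1 a, gS S vb))
      = splitIns a S ∘ gS (insert a S) := rfl
  rw [h1, entF_push_inj_comp _ (splitIns_inj a S) hρ]
  rfl

lemma FS_empty : FS ρ (∅ : Finset (Fin N)) = entF (push Prod.snd ρ) := by
  have hss : Subsingleton (∀ i : (∅ : Finset (Fin N)), α i.1) := by
    constructor
    intro t t'
    funext i
    exact absurd i.2 (Finset.notMem_empty _)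
  have he : Function.Injective
      (Prod.snd : ((∀ i : (∅ : Finset (Fin N)), α i.1) × β) → β) := by
    rintro ⟨t, c⟩ ⟨t', c'⟩ h
    exact Prod.ext (hss.elim t t') h
  rw [FS, ← entF_push_inj_comp _ he hρ]
  rfl

lemma FS_submod (a b' : Fin N) (S : Finset (Fin N)) :
    FS ρ (insert a (insert b' S)) + FS ρ S ≤ FS ρ (insert a S) + FS ρ (insert b' S) := by
  set G : ((∀ i, α i) × β) → (α a × α b' × ((∀ i : S, α i.1) × β)) :=
    fun vb => (vb.1 a, vb.1 b', gS S vb) with hGdef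
  have h := entF_submod (push G ρ) (push_nonneg _ hρ)
  have e1 : entF (push G ρ) = FS ρ (insert a (insert b' S)) := by
    rw [FS_insert hρ a (insert b' S)]
    have he : Function.Injective (Prod.map (id : α a → α a) (splitIns (α := α) (β := β) b' S)) :=
      Function.Injective.prodMap Function.injective_id (splitIns_inj b' S)
    have h2 : G = (Prod.map (id : α a → α a) (splitIns b' S))
        ∘ (fun vb => (vb.1 a, gS (insert b' S) vb)) := rfl
    rw [h2, entF_push_inj_comp _ he hρ]
  have e2 : entF (push (fun w : α a × α b' × ((∀ i : S, α i.1) × β) => (w.1, w.2.2)) (push G ρ))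
      = FS ρ (insert a S) := by
    rw [push_comp, FS_insert hρ a S]
    rfl
  have e3 : entF (push (fun w : α a × α b' × ((∀ i : S, α i.1) × β) => w.2) (push G ρ))
      = FS ρ (insert b' S) := by
    rw [push_comp, FS_insert hρ b' S]
    rfl
  have e4 : entF (push (fun w : α a × α b' × ((∀ i : S, α i.1) × β) => w.2.2) (push G ρ))
      = FS ρ S := by
    rw [push_comp]
    rfl
  rw [e1, e2, e3, e4] at h
  linarith

lemma FS_key : ∀ S : Finset (Fin N), S.Nonempty →
    ((S.card : ℝ) - 1) * FS ρ S + FS ρ ∅ ≤ ∑ i ∈ S, FS ρ (S.erase i) := by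
  classical
  intro S
  induction S using Finset.induction_on with
  | empty => intro h; exact absurd h (by simp)
  | insert a S₀ ha IH =>
    intro _
    rcases S₀.eq_empty_or_nonempty with rfl | hS₀
    · simp
    · have IH' := IH hS₀
      have step : ∀ i ∈ S₀, FS ρ (insert a S₀) + FS ρ (S₀.erase i)
          ≤ FS ρ (insert a (S₀.erase i)) + FS ρ S₀ := by
        intro i hi
        have h := FS_submod hρ a i (S₀.erase i)
        rwa [Finset.insert_erase hi] at h
      have h1 : ∑ i ∈ S₀, (FS ρ (insert a S₀) + FS ρ (S₀.erase i))
          ≤ ∑ i ∈ S₀, (FS ρ (insert a (S₀.erase i)) + FS ρ S₀) :=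
        Finset.sum_le_sum step
      rw [Finset.sum_add_distrib, Finset.sum_add_distrib, Finset.sum_const, Finset.sum_const,
        nsmul_eq_mul, nsmul_eq_mul] at h1
      have herase : ∑ i ∈ S₀, FS ρ ((insert a S₀).erase i)
          = ∑ i ∈ S₀, FS ρ (insert a (S₀.erase i)) :=
        Finset.sum_congr rfl fun i hi =>
          congrArg (FS ρ) (Finset.erase_insert_of_ne (fun h => ha (h ▸ hi)))
      rw [Finset.card_insert_of_notMem ha, Finset.sum_insert ha, Finset.erase_insert ha,
        herase]
      push_cast
      linarith

end Subsets

end HanAux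

/-- Conditional Han's inequality: the average over all size-`T` subsets `𝒯` of
`H(X_𝒯 | Q)` is at least `(T/N) · H(X₁, …, X_N | Q)`. -/
theorem stmt6 {Ω β : Type*} {N : ℕ} (α : Fin N → Type*) [∀ i, Fintype (α i)] [Fintype β]
    (μ : PMF Ω) (X : ∀ i, Ω → α i) (Q : Ω → β) (T : ℕ) (hT1 : 1 ≤ T) (hTN : T ≤ N) :
    (T : ℝ) / N * Hcond μ (fun ω => fun i : Fin N => X i ω) Q ≤
      (1 / (N.choose T : ℝ)) *
        ∑ 𝒯 ∈ Finset.powersetCard T (Finset.univ : Finset (Fin N)),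
          Hcond μ (fun ω => fun i : 𝒯 => X i.1 ω) Q := by
  classical
  open HanAux in
  set W : Ω → ((∀ i, α i) × β) := fun ω => (fun i => X i ω, Q ω) with hW
  set ρ : ((∀ i, α i) × β) → ℝ := fun a => ((μ.map W) a).toReal with hρdef
  have hρ : ∀ w, 0 ≤ ρ w := fun w => ENNReal.toReal_nonneg
  have hQ : Hent μ Q = FS ρ ∅ := by
    rw [FS_empty hρ]
    exact Hent_comp μ W Prod.snd
  have hsub : ∀ S : Finset (Fin N),
      Hcond μ (fun ω => fun i : S => X i.1 ω) Q = FS ρ S - FS ρ ∅ := by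
    intro S
    unfold Hcond
    rw [hQ]
    congr 1
    exact Hent_comp μ W (gS S)
  have hfull : Hcond μ (fun ω => fun i : Fin N => X i ω) Q = FS ρ Finset.univ - FS ρ ∅ := by
    unfold Hcond
    rw [hQ]
    congr 1
    have h1 : Hent μ (fun ω => ((fun i : Fin N => X i ω), Q ω)) = entF (push id ρ) :=
      Hent_comp μ W id
    have hginj : Function.Injective (gS (Finset.univ : Finset (Fin N)) :
        ((∀ i, α i) × β) → _) := by
      rintro ⟨v, b⟩ ⟨v', b'⟩ h
      simp only [gS, Prod.mk.injEq] at h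
      exact Prod.ext (funext fun i => congrFun h.1 ⟨i, Finset.mem_univ i⟩) h.2
    have h2 : FS ρ (Finset.univ : Finset (Fin N)) = entF (push id ρ) := by
      rw [FS, show (gS (Finset.univ : Finset (Fin N)) : ((∀ i, α i) × β) → _)
        = gS (Finset.univ : Finset (Fin N)) ∘ id from rfl, entF_push_inj_comp _ hginj hρ]
    rw [h1, h2]
  -- the subset sums
  set A : ℕ → ℝ := fun m =>
    ∑ S ∈ Finset.powersetCard m (Finset.univ : Finset (Fin N)), (FS ρ S - FS ρ ∅) with hA
  -- double counting
  have hdc : ∀ m : ℕ,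
      ∑ S ∈ Finset.powersetCard (m + 1) (Finset.univ : Finset (Fin N)), ∑ i ∈ S, FS ρ (S.erase i)
      = ∑ S' ∈ Finset.powersetCard m (Finset.univ : Finset (Fin N)),
          ((N - m : ℕ) : ℝ) * FS ρ S' := by
    intro m
    rw [Finset.sum_sigma' (Finset.powersetCard (m + 1) (Finset.univ : Finset (Fin N)))
      (fun S => S) (fun S i => FS ρ (S.erase i))]
    have hr : ∀ S' ∈ Finset.powersetCard m (Finset.univ : Finset (Fin N)),
        ((N - m : ℕ) : ℝ) * FS ρ S' = ∑ _i ∈ S'ᶜ, FS ρ S' := by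
      intro S' hS'
      rw [Finset.sum_const, Finset.card_compl, nsmul_eq_mul]
      congr 2
      · simp [Finset.mem_powersetCard.mp hS' |>.2]
    rw [Finset.sum_congr rfl hr]
    rw [Finset.sum_sigma' (Finset.powersetCard m (Finset.univ : Finset (Fin N)))
      (fun S' => S'ᶜ) (fun S' _i => FS ρ S')]
    refine Finset.sum_bij' (fun p _ => ⟨p.1.erase p.2, p.2⟩) (fun p _ => ⟨insert p.2 p.1, p.2⟩)
      ?_ ?_ ?_ ?_ ?_
    · rintro ⟨S, i⟩ hp
      rw [Finset.mem_sigma] at hp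
      obtain ⟨hS, hi⟩ := hp
      rw [Finset.mem_sigma]
      obtain ⟨hsub', hcard⟩ := Finset.mem_powersetCard.mp hS
      constructor
      · exact Finset.mem_powersetCard.mpr ⟨Finset.Subset.trans (Finset.erase_subset _ _) hsub',
          by rw [Finset.card_erase_of_mem hi, hcard]; rfl⟩
      · simp
    · rintro ⟨S', i⟩ hp
      rw [Finset.mem_sigma] at hp
      obtain ⟨hS', hi⟩ := hp
      rw [Finset.mem_sigma]
      obtain ⟨_, hcard⟩ := Finset.mem_powersetCard.mp hS'
      have hni : i ∉ S' := by simpa using hi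
      constructor
      · exact Finset.mem_powersetCard.mpr ⟨Finset.subset_univ _,
          by rw [Finset.card_insert_of_notMem hni, hcard]⟩
      · exact Finset.mem_insert_self _ _
    · rintro ⟨S, i⟩ hp
      rw [Finset.mem_sigma] at hp
      exact Sigma.ext (by simp [Finset.insert_erase hp.2]) (by simp)
    · rintro ⟨S', i⟩ hp
      rw [Finset.mem_sigma] at hp
      have hni : i ∉ S' := by simpa using hp.2
      exact Sigma.ext (by simp [Finset.erase_insert hni]) (by simp)
    · rintro ⟨S, i⟩ _
      rfl
  -- step inequality for the averages
  have hAstep : ∀ m : ℕ, m + 1 ≤ N → (m : ℝ) * A (m + 1) ≤ ((N - m : ℕ) : ℝ) * A m := by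
    intro m hm
    have hkey : ∀ S ∈ Finset.powersetCard (m + 1) (Finset.univ : Finset (Fin N)),
        (m : ℝ) * FS ρ S + FS ρ ∅ ≤ ∑ i ∈ S, FS ρ (S.erase i) := by
      intro S hS
      obtain ⟨_, hcard⟩ := Finset.mem_powersetCard.mp hS
      have hne : S.Nonempty := Finset.card_pos.mp (by omega)
      have := FS_key hρ S hne
      rwa [hcard, Nat.cast_add, Nat.cast_one, add_sub_cancel_right] at this
    have hsum := Finset.sum_le_sum hkey
    rw [hdc m, Finset.sum_add_distrib, Finset.sum_const, ← Finset.mul_sum, nsmul_eq_mul,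
      Finset.card_powersetCard, ← Finset.mul_sum] at hsum
    have hcu : (Finset.univ : Finset (Fin N)).card = N := by simp
    rw [hcu] at hsum
    -- hsum : m * B(m+1) + C(N,m+1) * FS∅ ≤ (N-m) * B m
    have hchoose : ((m + 1 : ℕ) : ℝ) * (N.choose (m + 1) : ℝ)
        = ((N - m : ℕ) : ℝ) * (N.choose m : ℝ) := by
      have h2 : ((N.choose (m+1) * (m+1) : ℕ) : ℝ) = ((N.choose m * (N - m) : ℕ) : ℝ) := by
        exact_mod_cast congrArg (Nat.cast : ℕ → ℝ) (Nat.choose_succ_right_eq N m)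
      rw [Nat.cast_mul, Nat.cast_mul] at h2
      rw [mul_comm, h2, mul_comm]
    have hBA : ∀ k : ℕ, (∑ S ∈ Finset.powersetCard k (Finset.univ : Finset (Fin N)), FS ρ S)
        = A k + (N.choose k : ℝ) * FS ρ ∅ := by
      intro k
      simp only [hA]
      rw [Finset.sum_sub_distrib, Finset.sum_const, nsmul_eq_mul, Finset.card_powersetCard, hcu]
      ring
    rw [hBA (m + 1), hBA m] at hsum
    have h4 : ((m + 1 : ℕ) : ℝ) * (N.choose (m + 1) : ℝ) * FS ρ ∅
        = ((N - m : ℕ) : ℝ) * (N.choose m : ℝ) * FS ρ ∅ := by rw [hchoose]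
    push_cast at hsum h4 ⊢
    linarith [hsum, h4]
  -- chain down from N to T
  have hCpos : (0 : ℝ) < (N.choose T : ℝ) := by
    exact_mod_cast Nat.choose_pos hTN
  have chain : ∀ k : ℕ, T + k ≤ N →
      (T : ℝ) * (N.choose T : ℝ) * A (T + k)
        ≤ ((T + k : ℕ) : ℝ) * (N.choose (T + k) : ℝ) * A T := by
    intro k
    induction k with
    | zero => intro _; simp
    | succ k IH =>
      intro hk
      have hk' : T + k ≤ N := by omega
      have IH' := IH hk'
      set m := T + k with hm
      have hmpos : (0 : ℝ) < (m : ℝ) := by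
        have : 1 ≤ m := by omega
        exact_mod_cast by omega
      have h1 := hAstep m (by omega)
      have hchoose : ((m + 1 : ℕ) : ℝ) * (N.choose (m + 1) : ℝ)
          = ((N - m : ℕ) : ℝ) * (N.choose m : ℝ) := by
        have h2 : ((N.choose (m+1) * (m+1) : ℕ) : ℝ) = ((N.choose m * (N - m) : ℕ) : ℝ) := by
          exact_mod_cast congrArg (Nat.cast : ℕ → ℝ) (Nat.choose_succ_right_eq N m)
        rw [Nat.cast_mul, Nat.cast_mul] at h2
        rw [mul_comm, h2, mul_comm]
      have hTC : (0 : ℝ) ≤ (T : ℝ) * (N.choose T : ℝ) := by positivity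
      have hr0 : (0 : ℝ) ≤ ((N - m : ℕ) : ℝ) := Nat.cast_nonneg _
      have h2 : (m : ℝ) * ((T : ℝ) * (N.choose T : ℝ) * A (m + 1))
          ≤ (m : ℝ) * (((m + 1 : ℕ) : ℝ) * (N.choose (m + 1) : ℝ) * A T) := by
        have ha := mul_le_mul_of_nonneg_left h1 hTC
        have hb := mul_le_mul_of_nonneg_left IH' hr0
        have h5 : ((m + 1 : ℕ) : ℝ) * (N.choose (m + 1) : ℝ) * ((m : ℝ) * A T)
            = ((N - m : ℕ) : ℝ) * (N.choose m : ℝ) * ((m : ℝ) * A T) := by rw [hchoose]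
        push_cast at ha hb h5 ⊢
        linarith [ha, hb, h5]
      have h3 := le_of_mul_le_mul_left h2 hmpos
      have : T + (k + 1) = m + 1 := by omega
      rw [this]
      exact h3
  have hfin := chain (N - T) (by omega)
  have hTN' : T + (N - T) = N := by omega
  rw [hTN'] at hfin
  have hAN : A N = FS ρ Finset.univ - FS ρ ∅ := by
    simp only [hA]
    have : Finset.powersetCard N (Finset.univ : Finset (Fin N))
        = {(Finset.univ : Finset (Fin N))} := by
      have hcu : (Finset.univ : Finset (Fin N)).card = N := by simp
      have h := Finset.powersetCard_self (Finset.univ : Finset (Fin N))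
      rw [hcu] at h
      exact h
    rw [this, Finset.sum_singleton]
  rw [hAN, Nat.choose_self, Nat.cast_one, mul_one] at hfin
  -- final rearrangement
  have hsumT : ∑ 𝒯 ∈ Finset.powersetCard T (Finset.univ : Finset (Fin N)),
      Hcond μ (fun ω => fun i : 𝒯 => X i.1 ω) Q = A T := by
    simp only [hA]
    exact Finset.sum_congr rfl fun S _ => hsub S
  rw [hsumT, hfull]
  have hNpos : (0 : ℝ) < (N : ℝ) := by
    have : 1 ≤ N := le_trans hT1 hTN
    exact_mod_cast by omega
  rw [div_mul_eq_mul_div, one_div, inv_mul_eq_div, div_le_div_iff₀ hNpos hCpos]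
  calc (T : ℝ) * (FS ρ Finset.univ - FS ρ ∅) * (N.choose T : ℝ)
      = (T : ℝ) * (N.choose T : ℝ) * (FS ρ Finset.univ - FS ρ ∅) := by ring
    _ ≤ (N : ℝ) * A T := hfin
    _ = A T * (N : ℝ) := by ring
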